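/- Let Y be an abelian group and μ̂₁, μ̂₂ : Y → ℂ functions satisfying μ̂₁(u+v)·μ̂₂(u−v) = μ̂₁(u)·μ̂₂(u)·μ̂₁(v)·μ̂₂(−v) for all u, v ∈ Y, with μ̂_k(0) = 1 and μ̂_k(−y) = conj(μ̂_k(y)). Then |μ̂₁(2y)| = |μ̂₂(2y)| for all y ∈ Y. -/

import Mathlib

theorem stmt_11 {Y : Type*} [AddCommGroup Y] (μ₁ μ₂ : Y → ℂ)
    (h0 : μ₁ 0 = 1 ∧ μ₂ 0 = 1)
    (hherm : ∀ y : Y, μ₁ (-y) = (starRingEnd ℂ) (μ₁ y) ∧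
      μ₂ (-y) = (starRingEnd ℂ) (μ₂ y))
    (heq : ∀ u v : Y,
      μ₁ (u + v) * μ₂ (u - v) = μ₁ u * μ₂ u * μ₁ v * μ₂ (-v)) :
    ∀ y : Y, ‖μ₁ (y + y)‖ = ‖μ₂ (y + y)‖ := by
  intro y
  have h1 := heq y y
  have h2 := heq y (-y)
  simp only [sub_self, sub_neg_eq_add, add_neg_cancel, neg_neg, h0.1, h0.2,
    (hherm y).1, (hherm y).2, one_mul, mul_one] at h1 h2
  rw [h1, h2]
  simp [map_mul, Complex.norm_conj]
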